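/- Converse Lelieuvre construction for a conjugate net: let N : ℝ² → ℝ³ be twice continuously differentiable and A, B : ℝ² → ℝ continuously differentiable, F : ℝ² → ℝ, with (A·N_x)_x + (B·N_y)_y = F·N at every point of ℝ². Then ∂_y( B·(N_y × N) ) = ∂_x( A·(N × N_x) ) everywhere, and there exists R : ℝ² → ℝ³ with R_x = B·(N_y × N) and R_y = A·(N × N_x) everywhere; moreover any such R satisfies ⟨N, R_x⟩ = 0, ⟨N, R_y⟩ = 0 and ⟨N, R_xy⟩ = 0 everywhere, i.e. R is a conjugate net having N as a co-normal field. -/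

import Mathlib

open Matrix

/-- Partial derivative with respect to the first coordinate. -/
noncomputable def pdx (f : ℝ × ℝ → (Fin 3 → ℝ)) (p : ℝ × ℝ) : Fin 3 → ℝ :=
  fderiv ℝ f p (1, 0)

/-- Partial derivative with respect to the second coordinate. -/
noncomputable def pdy (f : ℝ × ℝ → (Fin 3 → ℝ)) (p : ℝ × ℝ) : Fin 3 → ℝ :=
  fderiv ℝ f p (0, 1)


open MeasureTheory intervalIntegral

noncomputable def crossL : (Fin 3 → ℝ) →L[ℝ] (Fin 3 → ℝ) →L[ℝ] (Fin 3 → ℝ) :=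
  LinearMap.toContinuousLinearMap
    ((LinearMap.toContinuousLinearMap.toLinearMap).comp (crossProduct (R := ℝ)))

@[simp] lemma crossL_apply (a b : Fin 3 → ℝ) : crossL a b = a ⨯₃ b := rfl

lemma contDiff_cross {u v : ℝ × ℝ → Fin 3 → ℝ} (hu : ContDiff ℝ 1 u) (hv : ContDiff ℝ 1 v) :
    ContDiff ℝ 1 (fun q => u q ⨯₃ v q) := by
  have : ContDiff ℝ 1 (fun q => crossL (u q) (v q)) :=
    ((crossL.contDiff).comp hu).clm_apply hv
  simpa using this

lemma hasFDerivAt_cross {u v : ℝ × ℝ → Fin 3 → ℝ} {p : ℝ × ℝ}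
    {u' v' : ℝ × ℝ →L[ℝ] Fin 3 → ℝ}
    (hu : HasFDerivAt u u' p) (hv : HasFDerivAt v v' p) :
    HasFDerivAt (fun q => u q ⨯₃ v q)
      ((crossL (u p)).comp v' + ((crossL.comp u').flip (v p))) p := by
  have h1 : HasFDerivAt (fun q => crossL (u q)) (crossL.comp u') p :=
    (crossL.hasFDerivAt).comp p hu
  exact h1.clm_apply hv

lemma fderiv_smul_cross_apply {c : ℝ × ℝ → ℝ} {u v : ℝ × ℝ → Fin 3 → ℝ}
    (hc : ContDiff ℝ 1 c) (hu : ContDiff ℝ 1 u) (hv : ContDiff ℝ 1 v)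
    (p w : ℝ × ℝ) :
    fderiv ℝ (fun q => c q • (u q ⨯₃ v q)) p w
      = fderiv ℝ c p w • (u p ⨯₃ v p) + c p • ((fderiv ℝ u p w) ⨯₃ v p)
        + c p • (u p ⨯₃ (fderiv ℝ v p w)) := by
  have hc' := (hc.differentiable one_ne_zero p).hasFDerivAt
  have hu' := (hu.differentiable one_ne_zero p).hasFDerivAt
  have hv' := (hv.differentiable one_ne_zero p).hasFDerivAt
  have h := hc'.smul (hasFDerivAt_cross hu' hv')
  rw [HasFDerivAt.fderiv (f := fun q => c q • (u q ⨯₃ v q)) h]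
  simp [smul_add]
  abel

lemma fderiv_smul_apply {c : ℝ × ℝ → ℝ} {u : ℝ × ℝ → Fin 3 → ℝ}
    (hc : ContDiff ℝ 1 c) (hu : ContDiff ℝ 1 u) (p w : ℝ × ℝ) :
    fderiv ℝ (fun q => c q • u q) p w
      = fderiv ℝ c p w • u p + c p • fderiv ℝ u p w := by
  have h := ((hc.differentiable one_ne_zero p).hasFDerivAt).smul
    ((hu.differentiable one_ne_zero p).hasFDerivAt)
  rw [HasFDerivAt.fderiv (f := fun q => c q • u q) h]
  simp
  abel

lemma cross_add_left (a b v : Fin 3 → ℝ) : (a + b) ⨯₃ v = a ⨯₃ v + b ⨯₃ v := by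
  rw [map_add]; rfl

lemma cross_smul_left (r : ℝ) (a v : Fin 3 → ℝ) : (r • a) ⨯₃ v = r • (a ⨯₃ v) := by
  rw [LinearMap.map_smul]; rfl

local notation "V3" => Fin 3 → ℝ

noncomputable def oneForm (f g : ℝ × ℝ → V3) (p : ℝ × ℝ) : ℝ × ℝ →L[ℝ] V3 :=
  (ContinuousLinearMap.fst ℝ ℝ ℝ).smulRight (f p) + (ContinuousLinearMap.snd ℝ ℝ ℝ).smulRight (g p)

lemma oneForm_apply (f g : ℝ × ℝ → V3) (p w : ℝ × ℝ) :
    oneForm f g p w = w.1 • f p + w.2 • g p := by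
  simp [oneForm]

lemma exists_potential {f g : ℝ × ℝ → V3} (hf : ContDiff ℝ 1 f) (hg : ContDiff ℝ 1 g)
    (hclosed : ∀ q, fderiv ℝ f q (0, 1) = fderiv ℝ g q (1, 0)) :
    ∃ R : ℝ × ℝ → V3, ∀ p, fderiv ℝ R p (1, 0) = f p ∧ fderiv ℝ R p (0, 1) = g p := by
  classical
  set Df := fderiv ℝ f
  set Dg := fderiv ℝ g
  have hDfc : Continuous Df := hf.continuous_fderiv one_ne_zero
  have hDgc : Continuous Dg := hg.continuous_fderiv one_ne_zero
  have hfc : Continuous f := hf.continuous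
  have hgc : Continuous g := hg.continuous
  -- symmetry of the "exterior derivative"
  have hsymm : ∀ q u v : ℝ × ℝ,
      u.1 • Df q v + u.2 • Dg q v = v.1 • Df q u + v.2 • Dg q u := by
    intro q u v
    have hu : u = u.1 • ((1 : ℝ), (0 : ℝ)) + u.2 • ((0 : ℝ), (1 : ℝ)) := by
      ext <;> simp
    have hv : v = v.1 • ((1 : ℝ), (0 : ℝ)) + v.2 • ((0 : ℝ), (1 : ℝ)) := by
      ext <;> simp
    rw [hu, hv]
    simp only [map_add, ContinuousLinearMap.map_smul, Prod.fst_add, Prod.snd_add,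
      Prod.smul_fst, Prod.smul_snd]
    simp only [smul_eq_mul, mul_one, mul_zero, add_zero, zero_add]
    rw [hclosed q]
    module
  -- the integrand and its derivative in the parameter
  set F : (ℝ × ℝ) → ℝ → V3 := fun x s => x.1 • f (s • x) + x.2 • g (s • x) with hF
  set F' : (ℝ × ℝ) → ℝ → (ℝ × ℝ →L[ℝ] V3) := fun x s =>
    (x.1 • (s • Df (s • x)) + (ContinuousLinearMap.fst ℝ ℝ ℝ).smulRight (f (s • x))) +
      (x.2 • (s • Dg (s • x)) + (ContinuousLinearMap.snd ℝ ℝ ℝ).smulRight (g (s • x)))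
    with hF'
  have hdiff : ∀ (s : ℝ) (x : ℝ × ℝ), HasFDerivAt (fun z => F z s) (F' x s) x := by
    intro s x
    have h1 : HasFDerivAt (fun z : ℝ × ℝ => s • z)
        (s • ContinuousLinearMap.id ℝ (ℝ × ℝ)) x :=
      (hasFDerivAt_id x).const_smul s
    have hfs : HasFDerivAt (fun z => f (s • z)) (s • Df (s • x)) x := by
      have h2 := ((hf.differentiable one_ne_zero (s • x)).hasFDerivAt).comp x h1
      have h3 : (Df (s • x)).comp (s • ContinuousLinearMap.id ℝ (ℝ × ℝ)) = s • Df (s • x) := by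
        ext w <;> simp
      rwa [h3] at h2
    have hgs : HasFDerivAt (fun z => g (s • z)) (s • Dg (s • x)) x := by
      have h2 := ((hg.differentiable one_ne_zero (s • x)).hasFDerivAt).comp x h1
      have h3 : (Dg (s • x)).comp (s • ContinuousLinearMap.id ℝ (ℝ × ℝ)) = s • Dg (s • x) := by
        ext w <;> simp
      rwa [h3] at h2
    exact (hasFDerivAt_fst.smul hfs).add (hasFDerivAt_snd.smul hgs)
  have hF'cont : Continuous (fun q : (ℝ × ℝ) × ℝ => F' q.1 q.2) := by
    have hsx : Continuous (fun q : (ℝ × ℝ) × ℝ => q.2 • q.1) :=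
      continuous_snd.smul continuous_fst
    apply Continuous.add
    · apply Continuous.add
      · exact (continuous_fst.fst).smul (continuous_snd.smul (hDfc.comp hsx))
      · exact ((ContinuousLinearMap.smulRightL ℝ (ℝ × ℝ) V3
          (ContinuousLinearMap.fst ℝ ℝ ℝ)).continuous).comp (hfc.comp hsx)
    · apply Continuous.add
      · exact (continuous_fst.snd).smul (continuous_snd.smul (hDgc.comp hsx))
      · exact ((ContinuousLinearMap.smulRightL ℝ (ℝ × ℝ) V3
          (ContinuousLinearMap.snd ℝ ℝ ℝ)).continuous).comp (hgc.comp hsx)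
  have hFcont : Continuous (fun q : (ℝ × ℝ) × ℝ => F q.1 q.2) := by
    have hsx : Continuous (fun q : (ℝ × ℝ) × ℝ => q.2 • q.1) :=
      continuous_snd.smul continuous_fst
    exact (continuous_fst.fst.smul (hfc.comp hsx)).add (continuous_fst.snd.smul (hgc.comp hsx))
  set R : ℝ × ℝ → V3 := fun x => ∫ s in (0 : ℝ)..1, F x s with hR
  have key : ∀ x₀ : ℝ × ℝ, HasFDerivAt R (oneForm f g x₀) x₀ := by
    intro x₀
    -- bound on a compact neighborhood
    have hK : IsCompact ((Metric.closedBall x₀ 1) ×ˢ (Set.Icc (0 : ℝ) 1)) :=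
      (isCompact_closedBall x₀ 1).prod isCompact_Icc
    obtain ⟨C, hC⟩ := hK.exists_bound_of_continuousOn hF'cont.continuousOn
    have hfd : HasFDerivAt (fun x => ∫ s in (0 : ℝ)..1, F x s)
        (∫ s in (0 : ℝ)..1, F' x₀ s) x₀ := by
      apply intervalIntegral.hasFDerivAt_integral_of_dominated_of_fderiv_le
        (s := Metric.ball x₀ 1) (bound := fun _ => C) (Metric.ball_mem_nhds x₀ one_pos)
      · exact Filter.Eventually.of_forall fun x =>
          ((hFcont.comp (continuous_const.prodMk continuous_id)).aestronglyMeasurable)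
      · exact (hFcont.comp (continuous_const.prodMk continuous_id)).intervalIntegrable _ _
      · exact (hF'cont.comp (continuous_const.prodMk continuous_id)).aestronglyMeasurable
      · refine Filter.Eventually.of_forall fun s hs x hx => ?_
        rw [Set.uIoc_of_le (by norm_num : (0:ℝ) ≤ 1)] at hs
        exact hC (x, s) ⟨Metric.ball_subset_closedBall hx, ⟨hs.1.le, hs.2⟩⟩
      · exact intervalIntegrable_const
      · exact Filter.Eventually.of_forall fun s _ x _ => hdiff s x
    have hint : IntervalIntegrable (F' x₀) volume 0 1 :=
      (hF'cont.comp (continuous_const.prodMk continuous_id)).intervalIntegrable _ _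
    have hval : (∫ s in (0 : ℝ)..1, F' x₀ s) = oneForm f g x₀ := by
      refine ContinuousLinearMap.ext fun w => ?_
      rw [ContinuousLinearMap.intervalIntegral_apply hint w, oneForm_apply]
      have hh : ∀ s : ℝ, HasDerivAt
          (fun t : ℝ => t • (w.1 • f (t • x₀) + w.2 • g (t • x₀))) (F' x₀ s w) s := by
        intro s
        have hx : HasDerivAt (fun t : ℝ => t • x₀) x₀ s := by
          simpa using (hasDerivAt_id s).smul_const x₀
        have hfs : HasDerivAt (fun t : ℝ => f (t • x₀)) (Df (s • x₀) x₀) s :=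
          ((hf.differentiable one_ne_zero (s • x₀)).hasFDerivAt).comp_hasDerivAt s hx
        have hgs : HasDerivAt (fun t : ℝ => g (t • x₀)) (Dg (s • x₀) x₀) s :=
          ((hg.differentiable one_ne_zero (s • x₀)).hasFDerivAt).comp_hasDerivAt s hx
        have hφ : HasDerivAt (fun t : ℝ => w.1 • f (t • x₀) + w.2 • g (t • x₀))
            (w.1 • Df (s • x₀) x₀ + w.2 • Dg (s • x₀) x₀) s :=
          (hfs.const_smul w.1).add (hgs.const_smul w.2)
        have hmain := (hasDerivAt_id s).smul hφ
        have h2 : x₀.1 • s • (Df (s • x₀)) w + x₀.2 • s • (Dg (s • x₀)) w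
            = s • (w.1 • Df (s • x₀) x₀ + w.2 • Dg (s • x₀) x₀) := by
          rw [← hsymm (s • x₀) x₀ w]
          module
        have h3 : F' x₀ s w
            = s • (w.1 • Df (s • x₀) x₀ + w.2 • Dg (s • x₀) x₀)
              + (w.1 • f (s • x₀) + w.2 • g (s • x₀)) := by
          simp only [hF', ContinuousLinearMap.add_apply, ContinuousLinearMap.smulRight_apply,
            ContinuousLinearMap.smul_apply, ContinuousLinearMap.coe_fst',
            ContinuousLinearMap.coe_snd']
          rw [← h2]
          abel
        rw [h3]
        exact hmain.congr_deriv (by simp)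
      have hintw : IntervalIntegrable (fun s => F' x₀ s w) volume 0 1 := by
        have : Continuous (fun s => F' x₀ s w) :=
          (ContinuousLinearMap.apply ℝ V3 w).continuous.comp
            (hF'cont.comp (continuous_const.prodMk continuous_id))
        exact this.intervalIntegrable _ _
      rw [intervalIntegral.integral_eq_sub_of_hasDerivAt (fun s _ => hh s) hintw]
      simp
    rw [hval] at hfd
    exact hfd
  refine ⟨R, fun p => ⟨?_, ?_⟩⟩
  · rw [(key p).fderiv, oneForm_apply]; simp
  · rw [(key p).fderiv, oneForm_apply]; simp

/-- Converse Lelieuvre construction for a conjugate net: if `N` satisfies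
`(A N_x)_x + (B N_y)_y = F N`, then `∂_y(B (N_y × N)) = ∂_x(A (N × N_x))`, a
position vector `R` with `R_x = B (N_y × N)`, `R_y = A (N × N_x)` exists, and any
such `R` is a conjugate net having `N` as a co-normal field. -/
theorem converse_lelieuvre_conjugate_net
    (N : ℝ × ℝ → (Fin 3 → ℝ)) (A B : ℝ × ℝ → ℝ) (F : ℝ × ℝ → ℝ)
    (hN : ContDiff ℝ 2 N) (hA : ContDiff ℝ 1 A) (hB : ContDiff ℝ 1 B)
    (heq : ∀ p,
      pdx (fun q => A q • pdx N q) p + pdy (fun q => B q • pdy N q) p = F p • N p) :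
    (∀ p, pdy (fun q => B q • (pdy N q ⨯₃ N q)) p
        = pdx (fun q => A q • (N q ⨯₃ pdx N q)) p) ∧
    (∃ R : ℝ × ℝ → (Fin 3 → ℝ), ∀ p,
        pdx R p = B p • (pdy N p ⨯₃ N p) ∧ pdy R p = A p • (N p ⨯₃ pdx N p)) ∧
    (∀ R : ℝ × ℝ → (Fin 3 → ℝ),
      (∀ p, pdx R p = B p • (pdy N p ⨯₃ N p) ∧ pdy R p = A p • (N p ⨯₃ pdx N p)) →
      ∀ p, N p ⬝ᵥ pdx R p = 0 ∧ N p ⬝ᵥ pdy R p = 0 ∧ N p ⬝ᵥ pdy (pdx R) p = 0) := by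
  have hN1 : ContDiff ℝ 1 N := hN.of_le one_le_two
  have hdN : ContDiff ℝ 1 (fderiv ℝ N) := hN.fderiv_right (by norm_num)
  have hNx : ContDiff ℝ 1 (pdx N) := hdN.clm_apply contDiff_const
  have hNy : ContDiff ℝ 1 (pdy N) := hdN.clm_apply contDiff_const
  have hf : ContDiff ℝ 1 (fun q => B q • (pdy N q ⨯₃ N q)) :=
    hB.smul (contDiff_cross hNy hN1)
  have hg : ContDiff ℝ 1 (fun q => A q • (N q ⨯₃ pdx N q)) :=
    hA.smul (contDiff_cross hN1 hNx)
  -- Part 1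
  have part1 : ∀ p, pdy (fun q => B q • (pdy N q ⨯₃ N q)) p
      = pdx (fun q => A q • (N q ⨯₃ pdx N q)) p := by
    intro p
    have hD : pdy (fun q => B q • pdy N q) p
        = fderiv ℝ B p (0, 1) • pdy N p + B p • fderiv ℝ (pdy N) p (0, 1) :=
      fderiv_smul_apply hB hNy p (0, 1)
    have hC : pdx (fun q => A q • pdx N q) p
        = fderiv ℝ A p (1, 0) • pdx N p + A p • fderiv ℝ (pdx N) p (1, 0) :=
      fderiv_smul_apply hA hNx p (1, 0)
    have hL : pdy (fun q => B q • (pdy N q ⨯₃ N q)) p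
        = (pdy (fun q => B q • pdy N q) p) ⨯₃ N p := by
      show fderiv ℝ (fun q => B q • (pdy N q ⨯₃ N q)) p (0, 1) = _
      rw [fderiv_smul_cross_apply hB hNy hN1 p (0, 1), hD, cross_add_left,
        cross_smul_left, cross_smul_left]
      have : fderiv ℝ N p (0, 1) = pdy N p := rfl
      rw [this, cross_self]
      simp
    have hR : pdx (fun q => A q • (N q ⨯₃ pdx N q)) p
        = N p ⨯₃ (pdx (fun q => A q • pdx N q) p) := by
      show fderiv ℝ (fun q => A q • (N q ⨯₃ pdx N q)) p (1, 0) = _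
      rw [fderiv_smul_cross_apply hA hN1 hNx p (1, 0), hC]
      have : fderiv ℝ N p (1, 0) = pdx N p := rfl
      rw [this, cross_self]
      rw [(crossProduct (N p)).map_add, ((crossProduct (N p))).map_smul,
        ((crossProduct (N p))).map_smul]
      simp
    rw [hL, hR]
    have hCD := heq p
    set C := pdx (fun q => A q • pdx N q) p
    set D := pdy (fun q => B q • pdy N q) p
    have hC' : C = F p • N p - D := by rw [← hCD]; abel
    rw [hC', (crossProduct (N p)).map_sub, (crossProduct (N p)).map_smul, cross_self,
      smul_zero, zero_sub, cross_anticomm]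
  refine ⟨part1, ?_, ?_⟩
  · obtain ⟨R, hRR⟩ := exists_potential hf hg (fun q => part1 q)
    exact ⟨R, fun p => ⟨(hRR p).1, (hRR p).2⟩⟩
  · -- Part 3
    intro R hR p
    have hx := (hR p).1
    have hy := (hR p).2
    have hfx : pdx R = fun q => B q • (pdy N q ⨯₃ N q) := funext fun q => (hR q).1
    refine ⟨?_, ?_, ?_⟩
    · rw [hx, dotProduct_smul, dot_cross_self, smul_zero]
    · rw [hy, dotProduct_smul, dot_self_cross, smul_zero]
    · rw [hfx]
      show N p ⬝ᵥ fderiv ℝ (fun q => B q • (pdy N q ⨯₃ N q)) p (0, 1) = 0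
      rw [fderiv_smul_cross_apply hB hNy hN1 p (0, 1)]
      have : fderiv ℝ N p (0, 1) = pdy N p := rfl
      rw [this, cross_self, smul_zero, add_zero, dotProduct_add, dotProduct_smul,
        dotProduct_smul, dot_cross_self, dot_cross_self, smul_zero, smul_zero, add_zero]
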